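/- For each integer r ≥ 3 there exist polynomials Q_{r-1} of degree r-1 and a constant c_r such that Q_{r-1}''(z) - z Q_{r-1}(z) - c_r + z^r = 0 for all z, where c_r = (3k)!/(3^k k!) if r = 3k for some positive integer k, and c_r = 0 otherwise. Consequently, for any solution y of y'' = zy, the function P_{r-2}(z) y(z) + Q_{r-1}(z) y'(z) with P_{r-2} = -Q_{r-1}' satisfies d/dz[P_{r-2} y + Q_{r-1} y'] = z^r y(z) - c_r y(z). -/

import Mathlib

open Polynomial

noncomputable def cAiry (r : ℕ) : ℂ :=
  if r % 3 = 0 then (r.factorial : ℂ) / (3 ^ (r / 3) * ((r / 3).factorial : ℂ)) else 0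

lemma cAiry_step (r : ℕ) :
    cAiry (r + 3) = ((r : ℂ) + 1) * ((r : ℂ) + 2) * cAiry r := by
  unfold cAiry
  have hmod : (r + 3) % 3 = r % 3 := Nat.add_mod_right r 3
  rw [hmod]
  by_cases h : r % 3 = 0
  · simp only [h, if_pos]
    obtain ⟨k, rfl⟩ := Nat.dvd_of_mod_eq_zero h
    have h1 : (3 * k + 3) / 3 = k + 1 := by omega
    have h2 : 3 * k / 3 = k := by omega
    rw [h1, h2]
    have hf : ((3 * k + 3).factorial : ℂ) =
        ((3*k : ℕ) + 1) * ((3*k : ℕ) + 2) * ((3*k : ℕ) + 3) * ((3*k).factorial : ℂ) := by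
      push_cast [show 3 * k + 3 = (3*k + 2) + 1 from rfl, Nat.factorial_succ]
      ring
    rw [hf, Nat.factorial_succ]
    have hk : ((k.factorial : ℂ)) ≠ 0 := Nat.cast_ne_zero.2 k.factorial_ne_zero
    have h3 : ((3:ℂ) ^ k) ≠ 0 := pow_ne_zero _ (by norm_num)
    have hk1 : ((k : ℂ) + 1) ≠ 0 := Nat.cast_add_one_ne_zero k
    push_cast
    field_simp [hk, h3, hk1]
    ring
  · simp [h]

lemma airy_key : ∀ r : ℕ, 3 ≤ r → ∃ Q : Polynomial ℂ,
    Q.natDegree = r - 1 ∧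
    derivative (derivative Q) - X * Q - C (cAiry r) + X ^ r = 0 := by
  intro r
  induction r using Nat.strong_induction_on with
  | _ r ih =>
    intro hr
    rcases lt_or_ge r 6 with h6 | h6
    · interval_cases r
      · refine ⟨X ^ 2, by simp, ?_⟩
        have hc : cAiry 3 = 2 := by norm_num [cAiry, Nat.factorial]
        rw [hc]
        simp [derivative_X_pow]
        simp only [C_ofNat]; ring
      · refine ⟨X ^ 3 + C 6, by compute_degree!, ?_⟩
        have hc : cAiry 4 = 0 := by norm_num [cAiry]
        rw [hc]
        simp [derivative_X_pow]
        simp only [C_ofNat]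
        norm_num
        ring
      · refine ⟨X ^ 4 + C 12 * X, by compute_degree!, ?_⟩
        have hc : cAiry 5 = 0 := by norm_num [cAiry]
        rw [hc]
        simp [derivative_X_pow]
        simp only [C_ofNat]
        norm_num
        ring
    · obtain ⟨s, rfl⟩ : ∃ s, r = s + 3 := ⟨r - 3, by omega⟩
      obtain ⟨Q, hdeg, hQ⟩ := ih s (by omega) (by omega)
      refine ⟨X ^ (s + 2) + C (((s : ℂ) + 1) * ((s : ℂ) + 2)) * Q, ?_, ?_⟩
      · have h1 : (C (((s : ℂ) + 1) * ((s : ℂ) + 2)) * Q).natDegree < (X ^ (s + 2) : Polynomial ℂ).natDegree := by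
          rw [natDegree_X_pow]
          calc (C (((s : ℂ) + 1) * ((s : ℂ) + 2)) * Q).natDegree ≤ Q.natDegree :=
                natDegree_C_mul_le _ _
            _ = s - 1 := hdeg
            _ < s + 2 := by omega
        rw [natDegree_add_eq_left_of_natDegree_lt h1, natDegree_X_pow]
        omega
      · rw [cAiry_step]
        have e1 : derivative (derivative ((X : Polynomial ℂ) ^ (s + 2))) =
            C (((s : ℂ) + 1) * ((s : ℂ) + 2)) * X ^ s := by
          simp [derivative_X_pow]
          simp only [C_ofNat]; ring
        simp only [derivative_add, derivative_C_mul, e1]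
        simp only [map_mul]
        linear_combination (C ((s : ℂ) + 1) * C ((s : ℂ) + 2) : Polynomial ℂ) * hQ

/-- For each `r ≥ 3` there is a polynomial `Q_{r-1}` of degree `r-1` with
`Q_{r-1}''(z) - z Q_{r-1}(z) - c_r + z^r = 0`, where `c_r = (3k)!/(3^k k!)` if `r = 3k`
and `c_r = 0` otherwise; consequently, for any solution `y` of `y'' = zy`, with
`P_{r-2} = -Q_{r-1}'`, one has `d/dz[P_{r-2} y + Q_{r-1} y'] = z^r y - c_r y`. -/
theorem airy_polynomial_reduction (r : ℕ) (hr : 3 ≤ r) :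
    ∃ Q : Polynomial ℂ,
      Q.natDegree = r - 1 ∧
      (∀ z : ℂ,
        (Polynomial.derivative (Polynomial.derivative Q)).eval z - z * Q.eval z -
            (if r % 3 = 0 then (r.factorial : ℂ) / (3 ^ (r / 3) * ((r / 3).factorial : ℂ))
              else 0) + z ^ r = 0) ∧
      ∀ y : ℂ → ℂ, Differentiable ℂ y → Differentiable ℂ (deriv y) →
        (∀ z, deriv (deriv y) z = z * y z) →
        ∀ z : ℂ,
          deriv (fun w => (-(Polynomial.derivative Q).eval w) * y w + Q.eval w * deriv y w) z =
            z ^ r * y z -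
              (if r % 3 = 0 then (r.factorial : ℂ) / (3 ^ (r / 3) * ((r / 3).factorial : ℂ))
                else 0) * y z := by
  obtain ⟨Q, hdeg, hId⟩ := airy_key r hr
  have hc : (if r % 3 = 0 then (r.factorial : ℂ) / (3 ^ (r / 3) * ((r / 3).factorial : ℂ))
      else 0) = cAiry r := rfl
  have hQz : ∀ z : ℂ, (derivative (derivative Q)).eval z - z * Q.eval z - cAiry r + z ^ r = 0 := by
    intro z
    have := congrArg (eval z) hId
    simpa using this
  refine ⟨Q, hdeg, ?_, ?_⟩
  · intro z; rw [hc]; exact hQz z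
  · intro y hy hy' hyy z
    have h1 : HasDerivAt
        (fun w => (-(Polynomial.derivative Q).eval w) * y w + Q.eval w * deriv y w)
        ((-(derivative (derivative Q)).eval z) * y z + (-(derivative Q).eval z) * deriv y z +
          ((derivative Q).eval z * deriv y z + Q.eval z * deriv (deriv y) z)) z := by
      exact (((Q.derivative.hasDerivAt z).neg.mul (hy z).hasDerivAt).add
        ((Q.hasDerivAt z).mul ((hy' z).hasDerivAt)))
    rw [h1.deriv, hyy z, hc]
    linear_combination (-(y z)) * hQz z
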